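/- Let G = (V,E) be a finite simple graph and let (S, ρ) with S ⊆ E and ρ : S → 𝔽₂ be a valid partial assignment. Let e₀ ∈ S and let (S∖{e₀}, ρ') be the partial assignment obtained by restricting ρ to S∖{e₀}. Then (S∖{e₀}, ρ') is also valid. -/

import Mathlib

open Finset
open scoped Classical

noncomputable section

abbrev F2 : Type := ZMod 2

/-- The sum, in 𝔽₂, of the values of an edge-assignment `x` (defined on the edges in the
set `S`) over the edges of `S` incident to the vertex `u`. -/
def vdeg {V : Type*} [Fintype V] (S : Set (Sym2 V)) (x : {e : Sym2 V // e ∈ S} → F2)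
    (u : V) : F2 :=
  ∑ e : {e : Sym2 V // e ∈ S}, if u ∈ (e : Sym2 V) then x e else 0

/-- `f_ρ(v) = 1 + Σ_{e ∈ S, v ∈ e} ρ(e)` in 𝔽₂. -/
def fRho {V : Type*} [Fintype V] (S : Set (Sym2 V)) (ρ : {e : Sym2 V // e ∈ S} → F2)
    (v : V) : F2 :=
  1 + vdeg S ρ v

/-- A partial assignment `(S, ρ)` is valid if exactly one connected component `C` of
`(V, E∖S)` has `Σ_{v∈C} f_ρ(v) = 1`, and that component has more than `|V|/2`
vertices. -/
def IsValid {V : Type*} [Fintype V] (G : SimpleGraph V) (S : Set (Sym2 V))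
    (ρ : {e : Sym2 V // e ∈ S} → F2) : Prop :=
  (∃! C : (G.deleteEdges S).ConnectedComponent,
      (∑ v : V, C.supp.indicator (fRho S ρ) v) = 1) ∧
  (∀ C : (G.deleteEdges S).ConnectedComponent,
      (∑ v : V, C.supp.indicator (fRho S ρ) v) = 1 →
      Fintype.card V < 2 * C.supp.ncard)

lemma vdeg_eq_sum {V : Type*} [Fintype V] (S : Set (Sym2 V))
    (x : {e : Sym2 V // e ∈ S} → F2) (ρb : Sym2 V → F2)
    (hx : ∀ e : {e : Sym2 V // e ∈ S}, x e = ρb e.1) (u : V)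
    (t : Finset (Sym2 V)) (ht : ∀ e, e ∈ t ↔ e ∈ S) :
    vdeg S x u = ∑ e ∈ t, if u ∈ e then ρb e else 0 := by
  rw [Finset.sum_subtype t ht (fun e => if u ∈ e then ρb e else 0)]
  exact Fintype.sum_congr _ _ fun e => by simp [hx e]


lemma vdeg_split {V : Type*} [Fintype V] (S : Set (Sym2 V)) (ρ : {e : Sym2 V // e ∈ S} → F2)
    (e₀ : Sym2 V) (he₀ : e₀ ∈ S) (u : V) :
    vdeg S ρ u = vdeg (S \ {e₀}) (fun e => ρ ⟨e.1, e.2.1⟩) u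
      + (if u ∈ e₀ then ρ ⟨e₀, he₀⟩ else 0) := by
  classical
  set ρb : Sym2 V → F2 := fun e => if h : e ∈ S then ρ ⟨e, h⟩ else 0 with hρb
  have hA := vdeg_eq_sum S ρ ρb (fun e => by simp [hρb, e.2]) u S.toFinset
    (fun e => Set.mem_toFinset)
  have hB := vdeg_eq_sum (S \ {e₀}) (fun e => ρ ⟨e.1, e.2.1⟩) ρb
    (fun e => by simp [hρb, e.2.1]) u (S.toFinset \ {e₀})
    (fun e => by simp [Set.mem_toFinset])
  have hmem : e₀ ∈ S.toFinset := Set.mem_toFinset.mpr he₀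
  rw [hA, hB,
    Finset.sum_eq_sum_sdiff_singleton_add hmem (fun e => if u ∈ e then ρb e else 0)]
  congr 1
  simp [hρb, he₀]

lemma fRho_split {V : Type*} [Fintype V] (S : Set (Sym2 V)) (ρ : {e : Sym2 V // e ∈ S} → F2)
    (e₀ : Sym2 V) (he₀ : e₀ ∈ S) (v : V) :
    fRho (S \ {e₀}) (fun e => ρ ⟨e.1, e.2.1⟩) v
      = fRho S ρ v + (if v ∈ e₀ then ρ ⟨e₀, he₀⟩ else 0) := by
  have h := vdeg_split S ρ e₀ he₀ v
  have hself : ∀ x : F2, x + x = 0 := by decide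
  unfold fRho
  rw [h]
  generalize (if v ∈ e₀ then ρ ⟨e₀, he₀⟩ else 0) = c
  have : (1 : F2) + (vdeg (S \ {e₀}) (fun e => ρ ⟨e.1, e.2.1⟩) v + c) + c
      = 1 + vdeg (S \ {e₀}) (fun e => ρ ⟨e.1, e.2.1⟩) v + (c + c) := by ring
  rw [this, hself, add_zero]

/-- validity of partial assignments is preserved under unfixing an edge
(downward closure; Lemma `lem: first_two_cond_satisfied`). -/
theorem stmt15 {V : Type*} [Fintype V] (G : SimpleGraph V)
    (S : Set (Sym2 V)) (hS : S ⊆ G.edgeSet)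
    (ρ : {e : Sym2 V // e ∈ S} → F2)
    (hvalid : IsValid G S ρ)
    (e₀ : Sym2 V) (he₀ : e₀ ∈ S) :
    IsValid G (S \ {e₀}) (fun e => ρ ⟨e.1, e.2.1⟩) := by
  classical
  obtain ⟨a, b, he⟩ := (Sym2.exists (f := fun e => e₀ = e)).mp ⟨e₀, rfl⟩
  subst he
  obtain ⟨⟨C₀, hC₀, huniq⟩, hbig⟩ := hvalid
  set S' : Set (Sym2 V) := S \ {s(a, b)} with hS'
  set ρ' : {e : Sym2 V // e ∈ S'} → F2 := fun e => ρ ⟨e.1, e.2.1⟩ with hρ'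
  have hle : G.deleteEdges S ≤ G.deleteEdges S' :=
    SimpleGraph.deleteEdges_anti Set.diff_subset
  set φ : (G.deleteEdges S).ConnectedComponent → (G.deleteEdges S').ConnectedComponent :=
    SimpleGraph.ConnectedComponent.map (SimpleGraph.Hom.ofLE hle) with hφ
  have hφmk : ∀ v : V, φ ((G.deleteEdges S).connectedComponentMk v)
      = (G.deleteEdges S').connectedComponentMk v := fun v => rfl
  haveI : Fintype (G.deleteEdges S).ConnectedComponent := Fintype.ofFinite _
  -- the endpoints a, b are adjacent in the new graph
  have hadjG : G.Adj a b := hS he₀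
  have hab : a ≠ b := hadjG.ne
  have hadj : (G.deleteEdges S').Adj a b := by
    rw [SimpleGraph.deleteEdges_adj]
    exact ⟨hadjG, by simp [hS']⟩
  have hself : ∀ x : F2, x + x = 0 := by decide
  set c : F2 := ρ ⟨s(a, b), he₀⟩ with hc
  -- correction sum vanishes on every new component
  have hcorr : ∀ D : (G.deleteEdges S').ConnectedComponent,
      (∑ v : V, if v ∈ D.supp then (if v ∈ s(a, b) then c else 0) else 0) = 0 := by
    intro D
    have hDiff : a ∈ D.supp ↔ b ∈ D.supp := by
      rw [SimpleGraph.ConnectedComponent.mem_supp_iff,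
        SimpleGraph.ConnectedComponent.mem_supp_iff,
        SimpleGraph.ConnectedComponent.connectedComponentMk_eq_of_adj hadj]
    have h1 : (∑ v : V, if v ∈ D.supp then (if v ∈ s(a, b) then c else 0) else 0)
        = ∑ v ∈ ({a, b} : Finset V), if v ∈ D.supp then (if v ∈ s(a, b) then c else 0) else 0 := by
      refine (Finset.sum_subset (Finset.subset_univ _) fun x _ hx => ?_).symm
      have : x ∉ s(a, b) := by
        rw [Sym2.mem_iff]
        simpa using hx
      simp [this]
    rw [h1, Finset.sum_pair hab]
    by_cases ha : a ∈ D.supp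
    · have hb : b ∈ D.supp := hDiff.mp ha
      simp [ha, hb, hself]
    · have hb : b ∉ D.supp := fun h => ha (hDiff.mpr h)
      simp [ha, hb]
  -- decomposition of indicator sums over new components
  have hdecomp : ∀ (f : V → F2) (D : (G.deleteEdges S').ConnectedComponent),
      (∑ v : V, D.supp.indicator f v)
        = ∑ C ∈ Finset.univ.filter (fun C => φ C = D), ∑ v : V, C.supp.indicator f v := by
    intro f D
    rw [Finset.sum_comm]
    refine Finset.sum_congr rfl fun v _ => ?_
    set Cv := (G.deleteEdges S).connectedComponentMk v with hCv
    by_cases h : φ Cv = D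
    · rw [Finset.sum_eq_single_of_mem Cv (by simp [h])]
      · have hvD : v ∈ D.supp := by
          rw [SimpleGraph.ConnectedComponent.mem_supp_iff, ← hφmk v, ← hCv, h]
        have hvC : v ∈ Cv.supp := by
          rw [SimpleGraph.ConnectedComponent.mem_supp_iff]
        rw [Set.indicator_of_mem hvD, Set.indicator_of_mem hvC]
      · intro C _ hne
        refine Set.indicator_of_notMem (fun hvC => hne ?_) f
        rw [SimpleGraph.ConnectedComponent.mem_supp_iff] at hvC
        rw [← hvC]
    · have hvD : v ∉ D.supp := by
        rw [SimpleGraph.ConnectedComponent.mem_supp_iff, ← hφmk v]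
        exact h
      rw [Set.indicator_of_notMem hvD]
      refine (Finset.sum_eq_zero fun C hC => ?_).symm
      simp only [Finset.mem_filter, Finset.mem_univ, true_and] at hC
      refine Set.indicator_of_notMem (fun hvC => h ?_) f
      rw [SimpleGraph.ConnectedComponent.mem_supp_iff] at hvC
      rw [hCv, hvC, hC]
  -- new component sums
  have hpt : ∀ (D : (G.deleteEdges S').ConnectedComponent) (v : V),
      D.supp.indicator (fRho S' ρ') v
        = D.supp.indicator (fRho S ρ) v
          + (if v ∈ D.supp then (if v ∈ s(a, b) then c else 0) else 0) := by
    intro D v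
    by_cases hv : v ∈ D.supp
    · simp only [Set.indicator_apply, hv, if_true]
      exact fRho_split S ρ s(a, b) he₀ v
    · simp [Set.indicator_apply, hv]
  have hs0 : ∀ C : (G.deleteEdges S).ConnectedComponent, C ≠ C₀ →
      (∑ v : V, C.supp.indicator (fRho S ρ) v) = 0 := by
    intro C hne
    have h01 : ∀ x : F2, x ≠ 1 → x = 0 := by decide
    exact h01 _ fun h => hne (huniq C h)
  have hT : ∀ D : (G.deleteEdges S').ConnectedComponent,
      (∑ v : V, D.supp.indicator (fRho S' ρ') v) = if φ C₀ = D then 1 else 0 := by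
    intro D
    have : (∑ v : V, D.supp.indicator (fRho S' ρ') v)
        = (∑ v : V, D.supp.indicator (fRho S ρ) v)
          + ∑ v : V, (if v ∈ D.supp then (if v ∈ s(a, b) then c else 0) else 0) := by
      rw [← Finset.sum_add_distrib]
      exact Finset.sum_congr rfl fun v _ => hpt D v
    rw [this, hcorr D, add_zero, hdecomp (fRho S ρ) D]
    by_cases hD : φ C₀ = D
    · rw [Finset.sum_eq_single_of_mem C₀ (by simp [hD])
        (fun C _ hne => hs0 C hne), hC₀, if_pos hD]
    · rw [if_neg hD]
      refine Finset.sum_eq_zero fun C hC => ?_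
      simp only [Finset.mem_filter, Finset.mem_univ, true_and] at hC
      exact hs0 C fun h => hD (h ▸ hC)
  constructor
  · refine ⟨φ C₀, ?_, fun D hD => ?_⟩
    · show (∑ v : V, (φ C₀).supp.indicator (fRho S' ρ') v) = 1
      rw [hT]; simp
    · replace hD : (∑ v : V, D.supp.indicator (fRho S' ρ') v) = 1 := hD
      by_contra hne
      rw [hT, if_neg (fun h => hne h.symm)] at hD
      exact one_ne_zero hD.symm
  · intro D hD
    replace hD : (∑ v : V, D.supp.indicator (fRho S' ρ') v) = 1 := hD
    have hDeq : φ C₀ = D := by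
      by_contra hne
      rw [hT, if_neg hne] at hD
      exact one_ne_zero hD.symm
    have hsub : C₀.supp ⊆ D.supp := by
      intro v hv
      rw [SimpleGraph.ConnectedComponent.mem_supp_iff] at hv ⊢
      rw [← hφmk v] at *
      rw [← hDeq, hφ, hv]
    have hcard : C₀.supp.ncard ≤ D.supp.ncard := Set.ncard_le_ncard hsub (Set.toFinite _)
    have := hbig C₀ hC₀
    omega
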